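/- For every integer a ≥ 2, the number of positive integers not representable as a nonnegative integer combination of a, a+2, a+3, a+4 equals (a²+4a+8)/8 if a ≡ 0 (mod 4), (a²+4a+3)/8 if a ≡ 1 (mod 4), (a²+4a+4)/8 if a ≡ 2 (mod 4), and (a²+4a+3)/8 if a ≡ 3 (mod 4). -/

import Mathlib

namespace Stmt12Aux

lemma aux_s (s k : ℕ) (h : s ≤ 4*k) (h1 : s ≠ 1) :
    ∃ x y z : ℕ, 2*x+3*y+4*z = s ∧ x+y+z ≤ k := by
  have h4 : s % 4 = 0 ∨ s % 4 = 1 ∨ s % 4 = 2 ∨ s % 4 = 3 := by omega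
  rcases h4 with h4 | h4 | h4 | h4
  · exact ⟨0, 0, s/4, by omega⟩
  · exact ⟨1, 1, (s-5)/4, by omega⟩
  · exact ⟨1, 0, (s-2)/4, by omega⟩
  · exact ⟨0, 1, (s-3)/4, by omega⟩

lemma rep_iff (a n : ℕ) (_ha : 2 ≤ a) :
    (∃ w x y z : ℕ, n = a * w + (a + 2) * x + (a + 3) * y + (a + 4) * z) ↔
    (n = 0 ∨ ∃ k, 1 ≤ k ∧ k*a ≤ n ∧ n ≤ k*(a+4) ∧ n ≠ k*a+1) := by
  constructor
  · rintro ⟨w, x, y, z, rfl⟩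
    by_cases hk : w + x + y + z = 0
    · left
      obtain ⟨rfl, rfl, rfl, rfl⟩ : w = 0 ∧ x = 0 ∧ y = 0 ∧ z = 0 := by omega
      simp
    · right
      refine ⟨w+x+y+z, by omega, ?_, ?_, ?_⟩
      · have : a * w + (a + 2) * x + (a + 3) * y + (a + 4) * z
            = (w+x+y+z)*a + (2*x+3*y+4*z) := by ring
        rw [this]; omega
      · have h2 : a * w + (a + 2) * x + (a + 3) * y + (a + 4) * z
            = (w+x+y+z)*a + (2*x+3*y+4*z) := by ring
        have h3 : (w+x+y+z)*(a+4) = (w+x+y+z)*a + 4*(w+x+y+z) := by ring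
        rw [h2, h3]; omega
      · have h2 : a * w + (a + 2) * x + (a + 3) * y + (a + 4) * z
            = (w+x+y+z)*a + (2*x+3*y+4*z) := by ring
        rw [h2]
        generalize (w+x+y+z)*a = m
        omega
  · rintro (rfl | ⟨k, hk1, hk2, hk3, hk4⟩)
    · exact ⟨0, 0, 0, 0, by ring⟩
    · have hk3' : n ≤ k*a + 4*k := by
        have : k*(a+4) = k*a + 4*k := by ring
        omega
      obtain ⟨x, y, z, hxyz, hle⟩ := aux_s (n - k*a) k (by omega) (by omega)
      refine ⟨k - (x+y+z), x, y, z, ?_⟩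
      have hw : (k - (x+y+z)) + x + y + z = k := by omega
      have : a * (k - (x+y+z)) + (a + 2) * x + (a + 3) * y + (a + 4) * z
          = ((k - (x+y+z)) + x + y + z) * a + (2*x+3*y+4*z) := by ring
      rw [this, hw, hxyz]
      omega

def Gap (a : ℕ) : Finset ℕ := (Finset.Icc 1 a).biUnion (fun k => Finset.Ioo (k*(a+4)) ((k+1)*a))
def Pts (a : ℕ) : Finset ℕ := (Finset.Icc 1 ((a+4)/4)).image (fun k => k*a+1)
def TT (a : ℕ) : Finset ℕ := (Finset.Ico 1 a ∪ Gap a) ∪ Pts a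
def Gsum (a : ℕ) : ℕ := ∑ k ∈ Finset.Icc 1 a, (a - (4*k+1))
def Tar (a : ℕ) : ℕ := (a^2 + 4*a + (if a % 4 = 0 then 8 else if a % 4 = 2 then 4 else 3))/8

lemma mem_TT (a n : ℕ) (ha : 2 ≤ a) :
    n ∈ TT a ↔ (0 < n ∧ ∀ k, 1 ≤ k → k*a ≤ n → n ≤ k*(a+4) → n = k*a+1) := by
  simp only [TT, Gap, Pts, Finset.mem_union, Finset.mem_Ico, Finset.mem_biUnion,
    Finset.mem_Icc, Finset.mem_Ioo, Finset.mem_image]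
  constructor
  · rintro ((⟨h1, h2⟩ | ⟨k, ⟨hk1, hk2⟩, hn1, hn2⟩) | ⟨k, ⟨hk1, hk2⟩, rfl⟩)
    · refine ⟨h1, fun j hj hj1 hj2 => ?_⟩
      have : a ≤ j*a := Nat.le_mul_of_pos_left a (by omega)
      omega
    · have hn0 : a + 4 ≤ k*(a+4) := Nat.le_mul_of_pos_left (a+4) (by omega)
      refine ⟨by omega, fun j hj hj1 hj2 => ?_⟩
      rcases Nat.lt_or_ge j (k+1) with h | h
      · have : j*(a+4) ≤ k*(a+4) := Nat.mul_le_mul_right _ (by omega)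
        omega
      · have : (k+1)*a ≤ j*a := Nat.mul_le_mul_right _ h
        omega
    · refine ⟨by omega, fun j hj hj1 hj2 => ?_⟩
      have hk4 : 4*k ≤ a + 4 := by omega
      rcases Nat.lt_trichotomy j k with h | rfl | h
      · have h1 : (j+1)*a ≤ k*a := Nat.mul_le_mul_right _ (by omega)
        have h2 : (j+1)*a = j*a + a := by ring
        have h3 : j*(a+4) = j*a + 4*j := by ring
        have h4 : 4*j ≤ 4*k - 4 := by omega
        rw [h3] at hj2
        omega
      · rfl
      · have h1 : (k+1)*a ≤ j*a := Nat.mul_le_mul_right _ h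
        have h2 : (k+1)*a = k*a + a := by ring
        omega
  · rintro ⟨hn, h⟩
    rcases Nat.lt_or_ge n a with hna | hna
    · exact Or.inl (Or.inl ⟨hn, hna⟩)
    · set k := n / a with hkdef
      have hk1 : 1 ≤ k := (Nat.one_le_div_iff (by omega)).mpr hna
      have hk2 : k*a ≤ n := Nat.div_mul_le_self n a
      have hk3 : n < (k+1)*a := by
        have e0 := Nat.div_add_mod n a
        have e1 : n % a < a := Nat.mod_lt n (by omega)
        have e2 : (k+1)*a = k*a + a := by ring
        have e3 : k*a = a * (n/a) := by rw [hkdef]; ring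
        omega
      rcases Nat.lt_or_ge (k*(a+4)) n with hcase | hcase
      · left; right
        refine ⟨k, ⟨hk1, ?_⟩, hcase, hk3⟩
        have e1 : (k+1)*a = k*a+a := by ring
        have e2 : k*(a+4) = k*a+4*k := by ring
        omega
      · have hn1 : n = k*a+1 := h k hk1 hk2 hcase
        right
        refine ⟨k, ⟨hk1, ?_⟩, hn1.symm⟩
        rcases Nat.lt_or_ge k 2 with hk | hk
        · omega
        · by_contra hcon
          have hk5 : 4*k ≥ a + 5 := by omega
          obtain ⟨j, hj⟩ : ∃ j, k = j + 1 := ⟨k - 1, by omega⟩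
          have ea : j*(a+4) = j*a + 4*j := by ring
          have eb : k*a = j*a + a := by rw [hj]; ring
          have := h j (by omega) (by omega) (by omega)
          omega

lemma card_gap (a : ℕ) : (Gap a).card = Gsum a := by
  rw [Gap, Finset.card_biUnion]
  · apply Finset.sum_congr rfl
    intro k hk
    rw [Nat.card_Ioo]
    have e1 : (k+1)*a = k*a + a := by ring
    have e2 : k*(a+4) = k*a + 4*k := by ring
    omega
  · intro k hk j hj hkj
    simp only [Finset.mem_coe, Finset.mem_Icc] at hk hj
    rw [Function.onFun, Finset.disjoint_left]
    intro n hn hn'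
    simp only [Finset.mem_Ioo] at hn hn'
    rcases Nat.lt_or_ge k j with h | h
    · have h1 : (k+1)*a ≤ j*a := Nat.mul_le_mul_right _ (by omega)
      have h2 : j*a ≤ j*(a+4) := Nat.mul_le_mul_left _ (by omega)
      omega
    · have h' : j < k := by omega
      have h1 : (j+1)*a ≤ k*a := Nat.mul_le_mul_right _ (by omega)
      have h2 : k*a ≤ k*(a+4) := Nat.mul_le_mul_left _ (by omega)
      omega

lemma card_pts (a : ℕ) (ha : 2 ≤ a) : (Pts a).card = (a+4)/4 := by
  rw [Pts, Finset.card_image_of_injOn, Nat.card_Icc]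
  · omega
  · intro k1 _ k2 _ h
    simp only at h
    have h2 : k1 * a = k2 * a := by omega
    exact Nat.eq_of_mul_eq_mul_right (show 0 < a by omega) h2

lemma card_TT (a : ℕ) (ha : 2 ≤ a) : (TT a).card = (a - 1) + Gsum a + (a+4)/4 := by
  rw [TT, Finset.card_union_of_disjoint, Finset.card_union_of_disjoint, Nat.card_Ico,
    card_gap, card_pts a ha]
  · rw [Finset.disjoint_left]
    intro n hn hn'
    simp only [Finset.mem_Ico] at hn
    simp only [Gap, Finset.mem_biUnion, Finset.mem_Icc, Finset.mem_Ioo] at hn'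
    obtain ⟨k, ⟨hk1, _⟩, hn1, _⟩ := hn'
    have : a + 4 ≤ k*(a+4) := Nat.le_mul_of_pos_left (a+4) (by omega)
    omega
  · rw [Finset.disjoint_left]
    intro n hn hn'
    simp only [Pts, Finset.mem_image, Finset.mem_Icc] at hn'
    obtain ⟨k, ⟨hk1, hk2⟩, rfl⟩ := hn'
    have hka : a ≤ k*a := Nat.le_mul_of_pos_left a (by omega)
    have hk4 : 4*k ≤ a + 4 := by omega
    simp only [Finset.mem_union, Finset.mem_Ico, Gap, Finset.mem_biUnion,
      Finset.mem_Icc, Finset.mem_Ioo] at hn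
    rcases hn with ⟨_, h2⟩ | ⟨j, ⟨hj1, _⟩, hj2, hj3⟩
    · omega
    · have h1 : k ≤ j := by
        by_contra hc
        have h1' : (j+1)*a ≤ k*a := Nat.mul_le_mul_right _ (by omega)
        have h2' : (j+1)*a = j*a + a := by ring
        omega
      have h2 : k*a ≤ j*a := Nat.mul_le_mul_right _ h1
      have h3 : j*(a+4) = j*a + 4*j := by ring
      omega

lemma gsum_range (a : ℕ) : Gsum a = ∑ i ∈ Finset.range a, (a - (4*(1+i)+1)) := by
  rw [Gsum, show Finset.Icc 1 a = Finset.Ico 1 (a+1) by rw [Finset.Ico_add_one_right_eq_Icc],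
    Finset.sum_Ico_eq_sum_range]
  simp

lemma gsum_step (b : ℕ) : Gsum (b+4) = Gsum b + (b - 1) := by
  rw [gsum_range, gsum_range]
  have e1 : ∀ i, (b+4) - (4*(1+i)+1) = b - (4*i+1) := by intro i; omega
  simp only [e1]
  have : (b+4) = (b+3)+1 := by omega
  rw [this, Finset.sum_range_succ']
  simp only [show ∀ i, b - (4*(i+1)+1) = b - (4*(1+i)+1) from fun i => by omega]
  rw [Finset.sum_range_succ, Finset.sum_range_succ, Finset.sum_range_succ]
  have z1 : b - (4*(1+b)+1) = 0 := by omega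
  have z2 : b - (4*(1+(b+1))+1) = 0 := by omega
  have z3 : b - (4*(1+(b+2))+1) = 0 := by omega
  rw [z1, z2, z3]
  omega

lemma tar_step (b : ℕ) : Tar (b+4) = Tar b + (b+4) := by
  have hm : (b+4) % 4 = b % 4 := by omega
  rw [Tar, Tar, hm]
  have e : (b+4)^2 + 4*(b+4) + (if b % 4 = 0 then 8 else if b % 4 = 2 then 4 else 3)
      = (b^2 + 4*b + (if b % 4 = 0 then 8 else if b % 4 = 2 then 4 else 3)) + (b+4)*8 := by
    ring
  rw [e, Nat.add_mul_div_right _ _ (by norm_num : (0:ℕ) < 8)]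

lemma main_count : ∀ a, 2 ≤ a → (a - 1) + Gsum a + (a+4)/4 = Tar a := by
  intro a
  induction a using Nat.strong_induction_on with
  | _ a IH =>
    intro ha
    rcases Nat.lt_or_ge a 6 with h6 | h6
    · interval_cases a <;> decide
    · obtain ⟨b, rfl⟩ : ∃ b, a = b + 4 := ⟨a - 4, by omega⟩
      have hb : 2 ≤ b := by omega
      have := IH b (by omega) hb
      rw [gsum_step, tar_step]
      omega

lemma set_eq (a : ℕ) (ha : 2 ≤ a) :
    {n : ℕ | 0 < n ∧
        ¬ ∃ w x y z : ℕ, n = a * w + (a + 2) * x + (a + 3) * y + (a + 4) * z} = ↑(TT a) := by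
  ext n
  simp only [Set.mem_setOf_eq, Finset.coe_sort_coe, Finset.mem_coe]
  rw [mem_TT a n ha]
  constructor
  · rintro ⟨hn, hrep⟩
    refine ⟨hn, fun k hk1 hk2 hk3 => ?_⟩
    by_contra hne
    exact hrep ((rep_iff a n ha).mpr (Or.inr ⟨k, hk1, hk2, hk3, hne⟩))
  · rintro ⟨hn, h⟩
    refine ⟨hn, fun hrep => ?_⟩
    rcases (rep_iff a n ha).mp hrep with rfl | ⟨k, hk1, hk2, hk3, hk4⟩
    · omega
    · exact hk4 (h k hk1 hk2 hk3)

lemma ncard_eq (a : ℕ) (ha : 2 ≤ a) :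
    {n : ℕ | 0 < n ∧
        ¬ ∃ w x y z : ℕ, n = a * w + (a + 2) * x + (a + 3) * y + (a + 4) * z}.ncard
      = Tar a := by
  rw [set_eq a ha, Set.ncard_coe_finset, card_TT a ha, main_count a ha]

end Stmt12Aux

theorem stmt12 (a : ℕ) (ha : 2 ≤ a) :
    (a % 4 = 0 → {n : ℕ | 0 < n ∧
        ¬ ∃ w x y z : ℕ, n = a * w + (a + 2) * x + (a + 3) * y + (a + 4) * z}.ncard
        = (a ^ 2 + 4 * a + 8) / 8) ∧
    (a % 4 = 1 → {n : ℕ | 0 < n ∧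
        ¬ ∃ w x y z : ℕ, n = a * w + (a + 2) * x + (a + 3) * y + (a + 4) * z}.ncard
        = (a ^ 2 + 4 * a + 3) / 8) ∧
    (a % 4 = 2 → {n : ℕ | 0 < n ∧
        ¬ ∃ w x y z : ℕ, n = a * w + (a + 2) * x + (a + 3) * y + (a + 4) * z}.ncard
        = (a ^ 2 + 4 * a + 4) / 8) ∧
    (a % 4 = 3 → {n : ℕ | 0 < n ∧
        ¬ ∃ w x y z : ℕ, n = a * w + (a + 2) * x + (a + 3) * y + (a + 4) * z}.ncard
        = (a ^ 2 + 4 * a + 3) / 8) := by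
  refine ⟨fun h => ?_, fun h => ?_, fun h => ?_, fun h => ?_⟩ <;>
    rw [Stmt12Aux.ncard_eq a ha] <;> simp [Stmt12Aux.Tar, h]
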